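/- Let A be an n×n real matrix and B an n×m real matrix such that the pair (A, B) is controllable. Then for all sufficiently small h > 0, the pair (A_h, B_h) with A_h = e^{Ah} and B_h = (∫₀ʰ e^{Aτ} dτ)B is controllable. -/

import Mathlib

open Matrix

/-- The controllability matrix `[B, AB, …, A^{n−1}B]`. -/
noncomputable def ctrbMatrix {n m : ℕ} (A : Matrix (Fin n) (Fin n) ℝ)
    (B : Matrix (Fin n) (Fin m) ℝ) : Matrix (Fin n) (Fin n × Fin m) ℝ :=
  Matrix.of fun i kj => (A ^ (kj.1 : ℕ) * B) i kj.2

lemma key_pow {R : Type*} [Ring R] [Algebra ℝ R] {n : ℕ} (X : R) (k : Fin n) :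
    (X - 1) ^ (k : ℕ) =
      ∑ l : Fin n, ((-1:ℝ)^((k:ℕ) - (l:ℕ)) * ((k:ℕ).choose (l:ℕ))) • X^(l:ℕ) := by
  have hterm : ∀ m : ℕ, X ^ m * (-1 : R) ^ ((k:ℕ) - m) * (((k:ℕ).choose m : ℕ) : R)
      = ((-1:ℝ)^((k:ℕ) - m) * ((k:ℕ).choose m)) • X^m := by
    intro m
    have h1 : (-1 : R) ^ ((k:ℕ) - m) = algebraMap ℝ R ((-1:ℝ) ^ ((k:ℕ) - m)) := by
      rw [_root_.map_pow, _root_.map_neg, _root_.map_one]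
    have h2 : (((k:ℕ).choose m : ℕ) : R) = algebraMap ℝ R (((k:ℕ).choose m : ℝ)) := by
      rw [_root_.map_natCast]
    rw [h1, h2, mul_assoc, ← _root_.map_mul, ← Algebra.commutes, ← Algebra.smul_def]
  have hb := (Commute.neg_one_right X).add_pow (k : ℕ)
  rw [← sub_eq_add_neg] at hb
  rw [hb, Fin.sum_univ_eq_sum_range
    (fun l => ((-1:ℝ)^((k:ℕ) - l) * ((k:ℕ).choose l)) • X^l) n]
  rw [Finset.sum_congr rfl (fun m _ => hterm m)]
  refine Finset.sum_subset (Finset.range_subset_range.2 (Nat.succ_le_of_lt k.isLt)) ?_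
  intro x _ hx
  rw [Finset.mem_range, not_lt] at hx
  rw [Nat.choose_eq_zero_of_lt (by omega), Nat.cast_zero, mul_zero, zero_smul]

lemma ctrb_factor {n m : ℕ} (c : ℝ) (X : Matrix (Fin n) (Fin n) ℝ)
    (Y : Matrix (Fin n) (Fin m) ℝ) :
    ∃ S : Matrix (Fin n × Fin m) (Fin n × Fin m) ℝ,
      ctrbMatrix (c • (X - 1)) (c • Y) = ctrbMatrix X Y * S := by
  refine ⟨Matrix.of (fun lj' kj => if lj'.2 = kj.2 then
    c^((kj.1:ℕ)+1) * ((-1:ℝ)^((kj.1:ℕ) - (lj'.1:ℕ)) * ((kj.1:ℕ).choose (lj'.1:ℕ))) else 0), ?_⟩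
  ext i kj
  obtain ⟨k, j⟩ := kj
  rw [Matrix.mul_apply]
  have lhs1 : ctrbMatrix (c • (X - 1)) (c • Y) i (k, j)
      = c^((k:ℕ)+1) * ((((X - 1)^(k:ℕ) * Y) : Matrix (Fin n) (Fin m) ℝ) i j) := by
    simp only [ctrbMatrix, Matrix.of_apply, smul_pow, Matrix.smul_mul, Matrix.mul_smul,
      smul_smul, Matrix.smul_apply, smul_eq_mul, pow_succ]
    ring
  rw [lhs1, key_pow X k, Matrix.sum_mul, Matrix.sum_apply, Finset.mul_sum]
  rw [Fintype.sum_prod_type]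
  refine Finset.sum_congr rfl (fun l _ => ?_)
  have : ∀ j' : Fin m, ctrbMatrix X Y i (l, j') *
      (Matrix.of (fun lj' kj => if lj'.2 = kj.2 then
        c^((kj.1:ℕ)+1) * ((-1:ℝ)^((kj.1:ℕ) - (lj'.1:ℕ)) * ((kj.1:ℕ).choose (lj'.1:ℕ))) else 0)
        : Matrix (Fin n × Fin m) (Fin n × Fin m) ℝ) (l, j') (k, j)
      = if j' = j then (X^(l:ℕ) * Y) i j' *
          (c^((k:ℕ)+1) * ((-1:ℝ)^((k:ℕ) - (l:ℕ)) * ((k:ℕ).choose (l:ℕ)))) else 0 := by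
    intro j'
    simp only [ctrbMatrix, Matrix.of_apply]
    split <;> simp [mul_comm]
  rw [Finset.sum_congr rfl (fun j' _ => this j'), Finset.sum_ite_eq' Finset.univ j
    (fun j' => (X^(l:ℕ) * Y) i j' * (c^((k:ℕ)+1) * ((-1:ℝ)^((k:ℕ) - (l:ℕ)) * ((k:ℕ).choose (l:ℕ)))))]
  simp only [Finset.mem_univ, if_true, Matrix.smul_mul, Matrix.smul_apply, smul_eq_mul]
  ring

lemma rank_det_ne {N : ℕ} (P : Matrix (Fin N) (Fin N) ℝ) (h : P.rank = N) : P.det ≠ 0 := by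
  intro hdet
  obtain ⟨v, hv, hPv⟩ := (Matrix.exists_mulVec_eq_zero_iff).2 hdet
  have hker : v ∈ LinearMap.ker P.mulVecLin := by
    simpa [Matrix.mulVecLin_apply] using hPv
  have hne : LinearMap.ker P.mulVecLin ≠ ⊥ := by
    intro hbot
    rw [hbot] at hker
    exact hv (by simpa using hker)
  have hpos : 0 < Module.finrank ℝ (LinearMap.ker P.mulVecLin) := by
    rw [Module.finrank_pos_iff]
    exact Submodule.nontrivial_iff_ne_bot.2 hne
  have hrn := LinearMap.finrank_range_add_finrank_ker P.mulVecLin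
  rw [Module.finrank_pi] at hrn
  have : P.rank + Module.finrank ℝ (LinearMap.ker P.mulVecLin) = N := by
    simpa [Matrix.rank] using hrn
  omega

/-- If `(A, B)` is controllable, then the exact zero-order-hold discretization
`(A_h, B_h) = (e^{Ah}, (∫₀ʰ e^{Aτ} dτ) B)` is controllable for all small `h > 0`. -/
theorem stmt13 {n m : ℕ}
    (A : Matrix (Fin n) (Fin n) ℝ) (B : Matrix (Fin n) (Fin m) ℝ)
    (hctrb : (ctrbMatrix A B).rank = n) :
    ∃ h₀ > (0:ℝ), ∀ h : ℝ, 0 < h → h < h₀ →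
      (ctrbMatrix (NormedSpace.exp (h • A))
        ((Matrix.of fun i j => ∫ τ in (0:ℝ)..h, NormedSpace.exp (τ • A) i j)
          * B)).rank = n := by
  classical
  letI : SeminormedRing (Matrix (Fin n) (Fin n) ℝ) := Matrix.linftyOpSemiNormedRing
  letI : NormedRing (Matrix (Fin n) (Fin n) ℝ) := Matrix.linftyOpNormedRing
  letI : NormedAlgebra ℝ (Matrix (Fin n) (Fin n) ℝ) := Matrix.linftyOpNormedAlgebra
  set E : ℝ → Matrix (Fin n) (Fin n) ℝ := fun h => NormedSpace.exp (h • A) with hE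
  set G : ℝ → Matrix (Fin n) (Fin n) ℝ :=
    fun h => Matrix.of fun i j => ∫ τ in (0:ℝ)..h, NormedSpace.exp (τ • A) i j with hG
  -- the nonvanishing determinant at the limit
  set M := ctrbMatrix A B with hM
  have hMrank : (M * Mᵀ).rank = n := by
    rw [Matrix.rank_self_mul_transpose]; exact hctrb
  have hdet0 : (M * Mᵀ).det ≠ 0 := rank_det_ne _ hMrank
  -- continuity of the determinant functional
  have hctrbCont : Continuous
      (fun p : Matrix (Fin n) (Fin n) ℝ × Matrix (Fin n) (Fin m) ℝ => ctrbMatrix p.1 p.2) := by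
    apply continuous_matrix
    intro i kj
    exact (Continuous.matrix_mul (continuous_fst.pow _) continuous_snd).matrix_elem _ _
  have hPhi : Continuous (fun p : Matrix (Fin n) (Fin n) ℝ × Matrix (Fin n) (Fin m) ℝ =>
      (ctrbMatrix p.1 p.2 * (ctrbMatrix p.1 p.2)ᵀ).det) :=
    (hctrbCont.matrix_mul hctrbCont.matrix_transpose).matrix_det
  -- limit of the rescaled exponential
  have hT1 : Filter.Tendsto (fun h : ℝ => h⁻¹ • (E h - 1))
      (nhdsWithin 0 (Set.Ioi 0)) (nhds A) := by
    have hd : HasDerivAt (fun t : ℝ => NormedSpace.exp (t • A)) A 0 := by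
      have := hasDerivAt_exp_smul_const (𝕂 := ℝ) A 0
      simp only [zero_smul, NormedSpace.exp_zero, one_mul] at this
      exact this
    have h2 : Filter.Tendsto (slope (fun t : ℝ => NormedSpace.exp (t • A)) 0)
        (nhdsWithin 0 (Set.Ioi 0)) (nhds A) :=
      (hasDerivAt_iff_tendsto_slope.mp hd).mono_left
        (nhdsWithin_mono _ (fun x hx => ne_of_gt hx))
    refine h2.congr (fun h => ?_)
    simp [slope, zero_smul, NormedSpace.exp_zero, hE]
  -- limit of the rescaled integral
  have hT2 : Filter.Tendsto (fun h : ℝ => h⁻¹ • G h)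
      (nhdsWithin 0 (Set.Ioi 0)) (nhds (1 : Matrix (Fin n) (Fin n) ℝ)) := by
    refine tendsto_pi_nhds.2 fun i => ?_
    refine tendsto_pi_nhds.2 fun j => ?_
    have hc : Continuous (fun τ : ℝ => NormedSpace.exp (τ • A) i j) :=
      (show Continuous (fun τ : ℝ => NormedSpace.exp (τ • A)) from
        continuous_iff_continuousAt.2 fun τ =>
          (hasDerivAt_exp_smul_const (𝕂 := ℝ) A τ).continuousAt).matrix_elem i j
    have hd : HasDerivAt (fun u : ℝ => ∫ τ in (0:ℝ)..u, NormedSpace.exp (τ • A) i j)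
        ((1 : Matrix (Fin n) (Fin n) ℝ) i j) 0 := by
      have := intervalIntegral.integral_hasDerivAt_right
        ((hc.intervalIntegrable (0:ℝ) (0:ℝ))) (hc.stronglyMeasurableAtFilter _ _) hc.continuousAt
      simpa [NormedSpace.exp_zero] using this
    have h2 := (hasDerivAt_iff_tendsto_slope.mp hd).mono_left
      (nhdsWithin_mono _ (fun x hx => ne_of_gt hx))
    refine h2.congr (fun h => ?_)
    simp [slope, intervalIntegral.integral_same, Matrix.smul_apply, Matrix.of_apply,
      smul_eq_mul, hG]
  -- combined limit
  have hmulB : Continuous (fun P : Matrix (Fin n) (Fin n) ℝ => P * B) :=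
    Continuous.matrix_mul continuous_id continuous_const
  have hT2' : Filter.Tendsto (fun h : ℝ => (h⁻¹ • G h) * B)
      (nhdsWithin 0 (Set.Ioi 0)) (nhds B) := by
    have h0 := (hmulB.tendsto (1 : Matrix (Fin n) (Fin n) ℝ)).comp hT2
    rw [Matrix.one_mul] at h0
    exact h0
  have hT : Filter.Tendsto (fun h : ℝ => (h⁻¹ • (E h - 1), (h⁻¹ • G h) * B))
      (nhdsWithin 0 (Set.Ioi 0)) (nhds (A, B)) := hT1.prodMk_nhds hT2'
  have hTot : Filter.Tendsto (fun h : ℝ =>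
      (ctrbMatrix (h⁻¹ • (E h - 1)) ((h⁻¹ • G h) * B) *
        (ctrbMatrix (h⁻¹ • (E h - 1)) ((h⁻¹ • G h) * B))ᵀ).det)
      (nhdsWithin 0 (Set.Ioi 0)) (nhds ((M * Mᵀ).det)) := by
    have := (hPhi.tendsto (A, B)).comp hT
    simpa [hM, Function.comp_def] using this
  have hev : ∀ᶠ h in nhdsWithin 0 (Set.Ioi 0),
      (ctrbMatrix (h⁻¹ • (E h - 1)) ((h⁻¹ • G h) * B) *
        (ctrbMatrix (h⁻¹ • (E h - 1)) ((h⁻¹ • G h) * B))ᵀ).det ≠ 0 :=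
    hTot.eventually_ne hdet0
  obtain ⟨ε, hε, hsub⟩ := Metric.mem_nhdsWithin_iff.1 hev
  refine ⟨ε, hε, fun h hh hhe => ?_⟩
  have hmem : h ∈ Metric.ball (0:ℝ) ε ∩ Set.Ioi 0 := by
    constructor
    · rw [Metric.mem_ball, Real.dist_eq, sub_zero, abs_of_pos hh]
      exact hhe
    · exact hh
  have hdet : (ctrbMatrix (h⁻¹ • (E h - 1)) ((h⁻¹ • G h) * B) *
      (ctrbMatrix (h⁻¹ • (E h - 1)) ((h⁻¹ • G h) * B))ᵀ).det ≠ 0 := hsub hmem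
  set C := ctrbMatrix (h⁻¹ • (E h - 1)) ((h⁻¹ • G h) * B) with hC
  have hrankCC : (C * Cᵀ).rank = n := by
    have := Matrix.rank_of_isUnit (C * Cᵀ)
      ((Matrix.isUnit_iff_isUnit_det _).2 (isUnit_iff_ne_zero.2 hdet))
    simpa using this
  have hCrank : C.rank = n := by
    refine le_antisymm ?_ ?_
    · have := Matrix.rank_le_card_height C
      simpa using this
    · calc n = (C * Cᵀ).rank := hrankCC.symm
        _ ≤ C.rank := Matrix.rank_mul_le_left C Cᵀ
  obtain ⟨S, hS⟩ := ctrb_factor h⁻¹ (E h) (G h * B)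
  have hCS : C = ctrbMatrix (E h) (G h * B) * S := by
    rw [hC, ← hS, Matrix.smul_mul]
  refine le_antisymm ?_ ?_
  · have := Matrix.rank_le_card_height (ctrbMatrix (E h) (G h * B))
    simpa using this
  · calc n = C.rank := hCrank.symm
      _ ≤ (ctrbMatrix (E h) (G h * B)).rank := by
          rw [hCS]; exact Matrix.rank_mul_le_left _ _
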